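/- Let a finite group G act on a finite set X, and for g ∈ G let ρ(g) be the corresponding X × X permutation matrix. Let A be an X × X matrix with integer entries such that A ρ(g) = ρ(g) A for all g ∈ G. Assume: (i) the permutation representation of G on ℂ[X] is multiplicity free, i.e., for every irreducible complex representation W of G the dimension of the space of G-equivariant linear maps from W to ℂ[X] is at most 1; and (ii) every irreducible G-subrepresentation of ℂ[X] has integer-valued character. Then every complex eigenvalue of A is an integer. -/

import Mathlib

/-- The permutation matrix of `g ∈ G` acting on the finite set `X`. -/
def permMat (G X : Type) [Group G] [MulAction G X] [Fintype X] [DecidableEq X]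
    (g : G) : Matrix X X ℂ :=
  Matrix.of fun x y => if g • y = x then 1 else 0

/-- The space of `G`-equivariant linear maps between (the spaces of) two
representations of `G`. -/
def equivariantMaps (G : Type) [Group G] {W V : Type} [AddCommGroup W] [Module ℂ W]
    [AddCommGroup V] [Module ℂ V] (ρW : Representation ℂ G W) (ρV : Representation ℂ G V) :
    Submodule ℂ (W →ₗ[ℂ] V) where
  carrier := {f | ∀ (g : G) (w : W), f (ρW g w) = ρV g (f w)}
  add_mem' := by
    intro f₁ f₂ h₁ h₂ g w
    simp [h₁ g w, h₂ g w]
  zero_mem' := by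
    intro g w
    simp
  smul_mem' := by
    intro c f hf g w
    simp [hf g w]

/-- A representation `ρ` of `G` on `V` is irreducible if `V` is nonzero and the only
`G`-invariant subspaces are `⊥` and `⊤`. -/
def IsIrreducibleRep (G : Type) [Group G] {V : Type} [AddCommGroup V] [Module ℂ V]
    (ρ : Representation ℂ G V) : Prop :=
  Nontrivial V ∧ ∀ U : Submodule ℂ V, (∀ (g : G) (v : V), v ∈ U → ρ g v ∈ U) → U = ⊥ ∨ U = ⊤

/-- The permutation representation of `G` on `X →₀ ℂ` (Mathlib's former
`Representation.ofMulAction`, which was stated on `X →₀ k`). -/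
noncomputable def ofMulActionFinsupp (G X : Type) [Group G] [MulAction G X] :
    Representation ℂ G (X →₀ ℂ) where
  toFun g := Finsupp.lmapDomain ℂ ℂ (g • ·)
  map_one' := by ext x y; simp
  map_mul' x y := by ext z w; simp [mul_smul]

section Helpers

open LinearMap TensorProduct

variable {G : Type} [Group G]

/-- Invariance of a submodule under a representation. -/
def RInv {V : Type} [AddCommGroup V] [Module ℂ V] (ρ : Representation ℂ G V)
    (U : Submodule ℂ V) : Prop :=
  ∀ (g : G) (v : V), v ∈ U → ρ g v ∈ U

variable {V : Type} [AddCommGroup V] [Module ℂ V]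

/-- Restriction of a representation to an invariant submodule. -/
def resRep (ρ : Representation ℂ G V) (U : Submodule ℂ V) (hU : RInv ρ U) :
    Representation ℂ G U where
  toFun g := (ρ g).restrict (fun v hv => hU g v hv)
  map_one' := by ext v; simp [LinearMap.restrict_apply]
  map_mul' g h := by ext v; simp [LinearMap.restrict_apply]

@[simp] lemma resRep_apply (ρ : Representation ℂ G V) (U : Submodule ℂ V) (hU : RInv ρ U)
    (g : G) (u : U) : (resRep ρ U hU g u : V) = ρ g (u : V) := rfl

lemma eigenspace_rinv (ρ : Representation ℂ G V) (f : V →ₗ[ℂ] V)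
    (hf : ∀ g v, f (ρ g v) = ρ g (f v)) (μ : ℂ) :
    RInv ρ (Module.End.eigenspace f μ) := by
  intro g v hv
  rw [Module.End.mem_eigenspace_iff] at hv ⊢
  rw [hf g v, hv, map_smul]

lemma schur_scalar [FiniteDimensional ℂ V] (ρ : Representation ℂ G V)
    (hirr : IsIrreducibleRep G ρ) (f : V →ₗ[ℂ] V) (hf : ∀ g v, f (ρ g v) = ρ g (f v)) :
    ∃ μ : ℂ, f = μ • LinearMap.id := by
  obtain ⟨hnt, hsub⟩ := hirr
  obtain ⟨μ, hμ⟩ := Module.End.exists_eigenvalue f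
  refine ⟨μ, ?_⟩
  have h2 := hsub (Module.End.eigenspace f μ) (eigenspace_rinv ρ f hf μ)
  have htop : Module.End.eigenspace f μ = ⊤ := by
    rcases h2 with h | h
    · exact absurd h hμ
    · exact h
  ext v
  have hv : v ∈ Module.End.eigenspace f μ := htop ▸ Submodule.mem_top
  rw [Module.End.mem_eigenspace_iff] at hv
  simpa using hv

/-- The operator `f ↦ a ∘ f ∘ b` on `Hom(V, U)`. -/
def conjComp {U V : Type} [AddCommGroup U] [Module ℂ U] [AddCommGroup V] [Module ℂ V]
    (a : U →ₗ[ℂ] U) (b : V →ₗ[ℂ] V) : (V →ₗ[ℂ] U) →ₗ[ℂ] (V →ₗ[ℂ] U) where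
  toFun f := a ∘ₗ f ∘ₗ b
  map_add' f₁ f₂ := by ext v; simp
  map_smul' c f := by ext v; simp

@[simp] lemma conjComp_apply {U V : Type} [AddCommGroup U] [Module ℂ U] [AddCommGroup V]
    [Module ℂ V] (a : U →ₗ[ℂ] U) (b : V →ₗ[ℂ] V) (f : V →ₗ[ℂ] U) :
    conjComp a b f = a ∘ₗ f ∘ₗ b := rfl

lemma trace_conjComp {U V : Type} [AddCommGroup U] [Module ℂ U] [AddCommGroup V] [Module ℂ V]
    [FiniteDimensional ℂ U] [FiniteDimensional ℂ V]
    (a : U →ₗ[ℂ] U) (b : V →ₗ[ℂ] V) :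
    trace ℂ (V →ₗ[ℂ] U) (conjComp a b) = trace ℂ U a * trace ℂ V b := by
  let e : (Module.Dual ℂ V ⊗[ℂ] U) ≃ₗ[ℂ] (V →ₗ[ℂ] U) := dualTensorHomEquiv ℂ V U
  have heq : conjComp a b ∘ₗ (e : (Module.Dual ℂ V ⊗[ℂ] U) →ₗ[ℂ] (V →ₗ[ℂ] U))
      = (e : (Module.Dual ℂ V ⊗[ℂ] U) →ₗ[ℂ] (V →ₗ[ℂ] U)) ∘ₗ
        TensorProduct.map (Module.Dual.transpose (R := ℂ) b) a := by
    apply TensorProduct.ext'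
    intro φ u
    ext v
    simp [e, dualTensorHomEquiv, Module.Dual.transpose]
  have key : conjComp a b =
      e.conj (TensorProduct.map (Module.Dual.transpose (R := ℂ) b) a) := by
    apply LinearMap.ext
    intro f
    have h2 := congrArg (fun T => T (e.symm f)) heq
    simp only [LinearMap.comp_apply, LinearEquiv.coe_coe, LinearEquiv.apply_symm_apply] at h2
    rw [h2, LinearEquiv.conj_apply]
    simp
  rw [key, trace_conj', trace_tensorProduct', trace_transpose', mul_comm]

lemma sum_char_eq [Fintype G] {W V : Type} [AddCommGroup W] [Module ℂ W] [AddCommGroup V]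
    [Module ℂ V] [FiniteDimensional ℂ W] [FiniteDimensional ℂ V]
    (ρW : Representation ℂ G W) (ρV : Representation ℂ G V) :
    ∑ g : G, trace ℂ V (ρV g) * trace ℂ W (ρW g⁻¹)
      = (Fintype.card G : ℂ) * (Module.finrank ℂ (equivariantMaps G ρW ρV) : ℂ) := by
  classical
  set n : ℂ := (Fintype.card G : ℂ) with hn
  have hn0 : n ≠ 0 := by
    simp [hn, Fintype.card_ne_zero]
  set Φ : ((W →ₗ[ℂ] V) →ₗ[ℂ] (W →ₗ[ℂ] V)) :=
    n⁻¹ • ∑ g : G, conjComp (ρV g) (ρW g⁻¹) with hΦ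
  have hΦapp : ∀ f : W →ₗ[ℂ] V, Φ f = n⁻¹ • ∑ g : G, ρV g ∘ₗ f ∘ₗ ρW g⁻¹ := by
    intro f
    simp [hΦ, LinearMap.sum_apply]
  have hproj : LinearMap.IsProj (equivariantMaps G ρW ρV) Φ := by
    constructor
    · intro f
      intro h w
      rw [hΦapp]
      simp only [LinearMap.smul_apply, LinearMap.sum_apply, LinearMap.comp_apply]
      rw [map_smul (ρV h), map_sum (ρV h)]
      congr 1
      refine Fintype.sum_equiv (Equiv.mulLeft h).symm _ _ ?_
      intro g
      have e1 : (Equiv.mulLeft h).symm g = h⁻¹ * g := rfl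
      rw [e1]
      have h1 : ρW g⁻¹ (ρW h w) = ρW (h⁻¹ * g)⁻¹ w := by
        rw [← Module.End.mul_apply, ← map_mul]
        congr 1
        group
      rw [h1, ← Module.End.mul_apply (ρV h), ← map_mul]
      congr 2
      group
    · intro f hf
      rw [hΦapp]
      have : ∀ g : G, ρV g ∘ₗ f ∘ₗ ρW g⁻¹ = f := by
        intro g
        ext w
        simp only [LinearMap.comp_apply]
        rw [hf g⁻¹ w, ← Module.End.mul_apply, ← map_mul, mul_inv_cancel, map_one,
          Module.End.one_apply]
      simp only [this, Finset.sum_const, Finset.card_univ]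
      rw [← Nat.cast_smul_eq_nsmul ℂ, smul_smul, ← hn, inv_mul_cancel₀ hn0, one_smul]
  have htr := hproj.trace
  have htr2 : trace ℂ (W →ₗ[ℂ] V) Φ
      = n⁻¹ * ∑ g : G, trace ℂ V (ρV g) * trace ℂ W (ρW g⁻¹) := by
    rw [hΦ, map_smul, map_sum, smul_eq_mul]
    congr 1
    exact Finset.sum_congr rfl fun g _ => trace_conjComp _ _
  rw [htr] at htr2
  field_simp [hn0] at htr2 ⊢
  rw [← htr2]

lemma exists_invariant_compl [Fintype G] [FiniteDimensional ℂ V]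
    (ρ : Representation ℂ G V) (S : Submodule ℂ V) (hS : RInv ρ S) :
    ∃ T : Submodule ℂ V, RInv ρ T ∧ IsCompl S T := by
  classical
  obtain ⟨T₀, hT₀⟩ := Submodule.exists_isCompl S
  set p₀ : V →ₗ[ℂ] V := S.subtype ∘ₗ (S.projectionOnto T₀ hT₀) with hp₀
  have hp₀mem : ∀ x, p₀ x ∈ S := fun x => (S.projectionOnto T₀ hT₀ x).2
  have hp₀id : ∀ x ∈ S, p₀ x = x := by
    intro x hx
    simp [hp₀, Submodule.projectionOnto_apply_left hT₀ ⟨x, hx⟩]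
  set n : ℂ := (Fintype.card G : ℂ) with hn
  have hn0 : n ≠ 0 := by simp [hn, Fintype.card_ne_zero]
  set π : V →ₗ[ℂ] V := n⁻¹ • ∑ g : G, ρ g ∘ₗ p₀ ∘ₗ ρ g⁻¹ with hπ
  have hπapp : ∀ x, π x = n⁻¹ • ∑ g : G, ρ g (p₀ (ρ g⁻¹ x)) := by
    intro x
    simp [hπ, LinearMap.sum_apply]
  have hπmem : ∀ x, π x ∈ S := by
    intro x
    rw [hπapp]
    refine Submodule.smul_mem _ _ (Submodule.sum_mem _ fun g _ => ?_)
    exact hS g _ (hp₀mem _)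
  have hπid : ∀ x ∈ S, π x = x := by
    intro x hx
    rw [hπapp]
    have : ∀ g : G, ρ g (p₀ (ρ g⁻¹ x)) = x := by
      intro g
      rw [hp₀id _ (hS g⁻¹ x hx), ← Module.End.mul_apply, ← map_mul, mul_inv_cancel, map_one,
        Module.End.one_apply]
    simp only [this, Finset.sum_const, Finset.card_univ]
    rw [← Nat.cast_smul_eq_nsmul ℂ, smul_smul, ← hn, inv_mul_cancel₀ hn0, one_smul]
  have hπequiv : ∀ (h : G) (x : V), π (ρ h x) = ρ h (π x) := by
    intro h x
    rw [hπapp, hπapp, map_smul (ρ h), map_sum (ρ h)]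
    congr 1
    refine Fintype.sum_equiv (Equiv.mulLeft h).symm _ _ ?_
    intro g
    have e1 : (Equiv.mulLeft h).symm g = h⁻¹ * g := rfl
    rw [e1]
    have h1 : ρ g⁻¹ (ρ h x) = ρ (h⁻¹ * g)⁻¹ x := by
      rw [← Module.End.mul_apply, ← map_mul]
      congr 1
      group
    rw [h1, ← Module.End.mul_apply (ρ h), ← map_mul]
    congr 2
    group
  have hπproj : IsProj S π := ⟨hπmem, hπid⟩
  refine ⟨ker π, ?_, hπproj.isCompl⟩
  intro g v hv
  rw [LinearMap.mem_ker] at hv ⊢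
  rw [hπequiv, hv, map_zero]

lemma exists_min_invariant [FiniteDimensional ℂ V] (ρ : Representation ℂ G V)
    (S : Submodule ℂ V) (hS : RInv ρ S) (hne : S ≠ ⊥) :
    ∃ U : Submodule ℂ V, U ≤ S ∧ RInv ρ U ∧ U ≠ ⊥ ∧
      ∀ U' : Submodule ℂ V, U' ≤ U → RInv ρ U' → U' = ⊥ ∨ U' = U := by
  obtain ⟨k, hk⟩ : ∃ k, Module.finrank ℂ S ≤ k := ⟨_, le_rfl⟩
  induction k generalizing S with
  | zero =>
    exfalso
    exact hne (Submodule.finrank_eq_zero.mp (Nat.le_zero.mp hk))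
  | succ k ih =>
    by_cases hmin : ∀ U' : Submodule ℂ V, U' ≤ S → RInv ρ U' → U' = ⊥ ∨ U' = S
    · exact ⟨S, le_rfl, hS, hne, hmin⟩
    · push_neg at hmin
      obtain ⟨U', hU'S, hU'inv, hU'ne, hU'neS⟩ := hmin
      have hlt : U' < S := lt_of_le_of_ne hU'S hU'neS
      have hrk : Module.finrank ℂ U' < Module.finrank ℂ S :=
        Submodule.finrank_lt_finrank_of_lt hlt
      obtain ⟨U, hUle, h1, h2, h3⟩ := ih U' hU'inv hU'ne (by omega)
      exact ⟨U, hUle.trans hU'S, h1, h2, h3⟩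

/-- The set of irreducible invariant submodules. -/
def IrrSubs (ρ : Representation ℂ G V) : Set (Submodule ℂ V) :=
  {U | RInv ρ U ∧ U ≠ ⊥ ∧
    ∀ U' : Submodule ℂ V, U' ≤ U → RInv ρ U' → U' = ⊥ ∨ U' = U}

lemma sSup_irrSubs [Fintype G] [FiniteDimensional ℂ V] (ρ : Representation ℂ G V) :
    sSup (IrrSubs ρ) = ⊤ := by
  set S := sSup (IrrSubs ρ) with hSdef
  have hSsup : S = ⨆ (U : IrrSubs ρ), (U : Submodule ℂ V) := sSup_eq_iSup' (IrrSubs ρ)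
  have hinv : RInv ρ S := by
    intro g v hv
    rw [hSsup] at hv ⊢
    refine Submodule.iSup_induction _ (motive := fun v => ρ g v ∈ _) hv ?_ ?_ ?_
    · intro U x hx
      exact Submodule.mem_iSup_of_mem U (U.2.1 g x hx)
    · simp
    · intro x y hx hy
      rw [map_add]
      exact Submodule.add_mem _ hx hy
  by_contra hne
  obtain ⟨T, hTinv, hTcompl⟩ := exists_invariant_compl ρ S hinv
  have hTne : T ≠ ⊥ := by
    intro h
    apply hne
    have := hTcompl.sup_eq_top
    rw [h, sup_bot_eq] at this
    exact this
  obtain ⟨U, hUT, hUinv, hUne, hUmin⟩ := exists_min_invariant ρ T hTinv hTne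
  have hUS : U ≤ S := le_sSup ⟨hUinv, hUne, hUmin⟩
  have : U ≤ ⊥ := by
    rw [← hTcompl.inf_eq_bot]
    exact le_inf hUS hUT
  exact hUne (le_bot_iff.mp this)

lemma resRep_irreducible (ρ : Representation ℂ G V) (U : Submodule ℂ V) (hU : RInv ρ U)
    (hUne : U ≠ ⊥)
    (hUmin : ∀ U' : Submodule ℂ V, U' ≤ U → RInv ρ U' → U' = ⊥ ∨ U' = U) :
    IsIrreducibleRep G (resRep ρ U hU) := by
  constructor
  · exact Submodule.nontrivial_iff_ne_bot.mpr hUne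
  · intro W' hW'
    have hinj := Submodule.map_injective_of_injective U.injective_subtype
    set U' : Submodule ℂ V := W'.map U.subtype with hU'def
    have hU'le : U' ≤ U := by
      rintro _ ⟨w, _, rfl⟩
      exact w.2
    have hU'inv : RInv ρ U' := by
      rintro g _ ⟨w, hw, rfl⟩
      exact ⟨resRep ρ U hU g w, hW' g w hw, rfl⟩
    rcases hUmin U' hU'le hU'inv with h | h
    · left
      apply hinj
      rw [← hU'def, h, Submodule.map_bot]
    · right
      apply hinj
      rw [← hU'def, h, Submodule.map_top, Submodule.range_subtype]

lemma char_conj [FiniteDimensional ℂ V] (ρ : Representation ℂ G V) (U : Submodule ℂ V)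
    (hU : RInv ρ U) (h g : G) :
    trace ℂ U (resRep ρ U hU (h * g * h⁻¹)) = trace ℂ U (resRep ρ U hU g) := by
  have : resRep ρ U hU (h * g * h⁻¹)
      = (resRep ρ U hU h * resRep ρ U hU g) * resRep ρ U hU h⁻¹ := by
    rw [← map_mul, ← map_mul]
  rw [this, Module.End.mul_eq_comp, LinearMap.trace_comp_comm', ← Module.End.mul_eq_comp,
    ← map_mul, ← map_mul, inv_mul_cancel_left]

end Helpers

section KeyProj

open LinearMap

variable {G : Type} [Group G] [Fintype G] {V : Type} [AddCommGroup V] [Module ℂ V]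

lemma scalar_on_irr [FiniteDimensional ℂ V] (ρ : Representation ℂ G V)
    (U : Submodule ℂ V) (hU : RInv ρ U)
    (V' : Submodule ℂ V) (hV'inv : RInv ρ V') (hV'ne : V' ≠ ⊥)
    (hV'min : ∀ U' : Submodule ℂ V, U' ≤ V' → RInv ρ U' → U' = ⊥ ∨ U' = V') :
    ∃ μ : ℂ,
      (∀ x ∈ V', (∑ g : G, trace ℂ U (resRep ρ U hU g⁻¹) • ρ g) x = μ • x) ∧
      μ * (Module.finrank ℂ V' : ℂ)
        = (Fintype.card G : ℂ) *
          (Module.finrank ℂ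
            (equivariantMaps G (resRep ρ U hU) (resRep ρ V' hV'inv)) : ℂ) := by
  classical
  set χ : G → ℂ := fun g => trace ℂ U (resRep ρ U hU g) with hχ
  set rV : Representation ℂ G V' := resRep ρ V' hV'inv with hrV
  set qV : (V' →ₗ[ℂ] V') := ∑ g : G, χ g⁻¹ • rV g with hqV
  have hirrV : IsIrreducibleRep G rV := resRep_irreducible ρ V' hV'inv hV'ne hV'min
  have hequiv : ∀ (h : G) (w : V'), qV (rV h w) = rV h (qV w) := by
    intro h w
    rw [hqV]
    simp only [LinearMap.sum_apply, LinearMap.smul_apply]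
    rw [map_sum (rV h)]
    have hR : ∀ g : G, rV h (χ g⁻¹ • rV g w) = χ g⁻¹ • rV (h * g) w := by
      intro g
      rw [map_smul, ← Module.End.mul_apply, ← map_mul]
    simp only [hR]
    refine Fintype.sum_equiv ((Equiv.mulLeft h⁻¹).trans (Equiv.mulRight h)) _ _ ?_
    intro g
    have e1 : ((Equiv.mulLeft h⁻¹).trans (Equiv.mulRight h)) g = h⁻¹ * g * h := rfl
    rw [e1]
    have h1 : rV g (rV h w) = rV (g * h) w := by
      rw [← Module.End.mul_apply, ← map_mul]
    rw [h1]
    have h2 : χ ((h⁻¹ * g * h)⁻¹) = χ g⁻¹ := by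
      have hgr : (h⁻¹ * g * h)⁻¹ = h⁻¹ * g⁻¹ * h⁻¹⁻¹ := by group
      rw [hgr]
      exact char_conj ρ U hU h⁻¹ g⁻¹
    have h3 : h * (h⁻¹ * g * h) = g * h := by group
    rw [h2, h3]
  obtain ⟨μ, hμ⟩ := schur_scalar rV hirrV qV (fun g v => hequiv g v)
  refine ⟨μ, ?_, ?_⟩
  · intro x hx
    have hres : (∑ g : G, χ g⁻¹ • ρ g) x = ((qV ⟨x, hx⟩ : V') : V) := by
      rw [hqV]
      simp only [LinearMap.sum_apply, LinearMap.smul_apply]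
      rw [Submodule.coe_sum]
      refine Finset.sum_congr rfl fun g _ => ?_
      rw [SetLike.val_smul]
      rfl
    rw [hres, hμ]
    simp
  · have ht1 : trace ℂ V' qV = ∑ g : G, χ g⁻¹ * trace ℂ V' (rV g) := by
      rw [hqV, map_sum]
      refine Finset.sum_congr rfl fun g _ => ?_
      rw [map_smul, smul_eq_mul]
    have ht2 : trace ℂ V' qV = μ * (Module.finrank ℂ V' : ℂ) := by
      rw [hμ, map_smul, trace_id, smul_eq_mul]
    have ht3 := sum_char_eq (resRep ρ U hU) rV
    rw [← ht2, ht1, ← ht3]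
    exact Finset.sum_congr rfl fun g _ => mul_comm _ _

lemma irr_eq_of_hom_ne_bot [FiniteDimensional ℂ V] (ρ : Representation ℂ G V)
    (hmf : ∀ (W : Type) (_ : AddCommGroup W) (_ : Module ℂ W) (ρW : Representation ℂ G W),
      IsIrreducibleRep G ρW → Module.finrank ℂ (equivariantMaps G ρW ρ) ≤ 1)
    (U : Submodule ℂ V) (hU : RInv ρ U) (hUne : U ≠ ⊥)
    (hUmin : ∀ U' : Submodule ℂ V, U' ≤ U → RInv ρ U' → U' = ⊥ ∨ U' = U)
    (V' : Submodule ℂ V) (hV'inv : RInv ρ V') (hV'ne : V' ≠ ⊥)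
    (hV'min : ∀ U' : Submodule ℂ V, U' ≤ V' → RInv ρ U' → U' = ⊥ ∨ U' = V')
    (hhom : equivariantMaps G (resRep ρ U hU) (resRep ρ V' hV'inv) ≠ ⊥) :
    V' = U := by
  classical
  set rU := resRep ρ U hU with hrU
  set rV := resRep ρ V' hV'inv with hrV
  have hirrU : IsIrreducibleRep G rU := resRep_irreducible ρ U hU hUne hUmin
  have hirrV : IsIrreducibleRep G rV := resRep_irreducible ρ V' hV'inv hV'ne hV'min
  obtain ⟨f, hfmem, hfne⟩ := Submodule.exists_mem_ne_zero_of_ne_bot hhom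
  have hfequiv : ∀ (g : G) (w : U), f (rU g w) = rV g (f w) := hfmem
  have hrange : LinearMap.range f = ⊤ := by
    have hinv : ∀ (g : G) (v : V'), v ∈ LinearMap.range f → rV g v ∈ LinearMap.range f := by
      rintro g _ ⟨w, rfl⟩
      exact ⟨rU g w, hfequiv g w⟩
    rcases hirrV.2 (LinearMap.range f) hinv with h | h
    · exact absurd (LinearMap.range_eq_bot.mp h) hfne
    · exact h
  set ι : (U : Submodule ℂ V) →ₗ[ℂ] V := U.subtype with hι
  set j : (U : Submodule ℂ V) →ₗ[ℂ] V := V'.subtype ∘ₗ f with hj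
  have hιmem : ι ∈ equivariantMaps G rU ρ := by
    intro g w
    simp [hι, hrU]
  have hjmem : j ∈ equivariantMaps G rU ρ := by
    intro g w
    simp only [hj, LinearMap.comp_apply]
    rw [hfequiv g w]
    simp [hrV]
  have hrk := hmf U _ _ rU hirrU
  set M := equivariantMaps G rU ρ with hM
  set I : M := ⟨ι, hιmem⟩ with hI
  set J : M := ⟨j, hjmem⟩ with hJ
  have hdep : ¬ LinearIndependent ℂ ![I, J] := by
    intro hind
    have h2 := hind.fintype_card_le_finrank
    simp only [Fintype.card_fin] at h2
    omega
  rw [LinearIndependent.pair_iff] at hdep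
  push_neg at hdep
  obtain ⟨s, t, hst, hstne⟩ := hdep
  have hιne : ι ≠ 0 := by
    intro h
    apply hUne
    have := Submodule.range_subtype U
    rw [← hι, h, LinearMap.range_zero] at this
    exact this.symm
  have hrangej : LinearMap.range j = V' := by
    rw [hj, LinearMap.range_comp, hrange, Submodule.map_top, Submodule.range_subtype]
  have hjne : j ≠ 0 := by
    intro h
    apply hV'ne
    rw [← hrangej, h, LinearMap.range_zero]
  have hsum : s • ι + t • j = 0 := by
    have := congrArg (Subtype.val : M → ((U : Submodule ℂ V) →ₗ[ℂ] V)) hst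
    simpa [hI, hJ] using this
  have ht0 : t ≠ 0 := by
    intro h
    rw [h, zero_smul, add_zero] at hsum
    rcases smul_eq_zero.mp hsum with h1 | h1
    · exact hstne h1 h
    · exact hιne h1
  have hjeq : j = (-s * t⁻¹) • ι := by
    have h1 : t • j = -(s • ι) := eq_neg_of_add_eq_zero_right hsum
    have hswap : (-s * t⁻¹) • ι = t⁻¹ • -(s • ι) := by
      rw [smul_neg, smul_smul, ← neg_smul]
      congr 1
      ring
    rw [hswap, ← h1, smul_smul, inv_mul_cancel₀ ht0, one_smul]
  have hc0 : (-s * t⁻¹) ≠ 0 := by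
    intro h
    rw [h, zero_smul] at hjeq
    exact hjne hjeq
  have hfin : LinearMap.range j = LinearMap.range ι := by
    rw [hjeq, LinearMap.range_smul ι _ hc0]
  rw [hrangej, hι, Submodule.range_subtype] at hfin
  exact hfin

end KeyProj

section KeyProj2

open LinearMap

variable {G : Type} [Group G] [Fintype G] {V : Type} [AddCommGroup V] [Module ℂ V]

lemma finrank_hom_self [FiniteDimensional ℂ V] (ρ : Representation ℂ G V)
    (U : Submodule ℂ V) (hU : RInv ρ U) (hUne : U ≠ ⊥)
    (hUmin : ∀ U' : Submodule ℂ V, U' ≤ U → RInv ρ U' → U' = ⊥ ∨ U' = U) :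
    Module.finrank ℂ (equivariantMaps G (resRep ρ U hU) (resRep ρ U hU)) = 1 := by
  set rU := resRep ρ U hU with hrU
  have hirrU : IsIrreducibleRep G rU := resRep_irreducible ρ U hU hUne hUmin
  have hnt : Nontrivial U := hirrU.1
  have hidne : (LinearMap.id : U →ₗ[ℂ] U) ≠ 0 := by
    obtain ⟨u, hu⟩ := exists_ne (0 : U)
    intro h
    have := congrArg (fun f : U →ₗ[ℂ] U => f u) h
    simp only [LinearMap.id_coe, id_eq, LinearMap.zero_apply] at this
    exact hu this
  have hle : equivariantMaps G rU rU ≤ ℂ ∙ (LinearMap.id : U →ₗ[ℂ] U) := by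
    intro f hf
    obtain ⟨μ, hμ⟩ := schur_scalar rU hirrU f hf
    rw [Submodule.mem_span_singleton]
    exact ⟨μ, hμ.symm⟩
  have hidmem : (LinearMap.id : U →ₗ[ℂ] U) ∈ equivariantMaps G rU rU := by
    intro g w
    simp
  have h1 : Module.finrank ℂ (equivariantMaps G rU rU) ≤ 1 := by
    have := Submodule.finrank_mono hle
    rwa [finrank_span_singleton hidne] at this
  have h2 : Module.finrank ℂ (equivariantMaps G rU rU) ≠ 0 := by
    intro h
    have hb := Submodule.finrank_eq_zero.mp h
    rw [hb] at hidmem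
    exact hidne (Submodule.mem_bot ℂ |>.mp hidmem)
  omega

lemma key_proj [FiniteDimensional ℂ V] (ρ : Representation ℂ G V)
    (hmf : ∀ (W : Type) (_ : AddCommGroup W) (_ : Module ℂ W) (ρW : Representation ℂ G W),
      IsIrreducibleRep G ρW → Module.finrank ℂ (equivariantMaps G ρW ρ) ≤ 1)
    (U : Submodule ℂ V) (hU : RInv ρ U) (hUne : U ≠ ⊥)
    (hUmin : ∀ U' : Submodule ℂ V, U' ≤ U → RInv ρ U' → U' = ⊥ ∨ U' = U) :
    LinearMap.IsProj U
      (((Module.finrank ℂ U : ℂ) * (Fintype.card G : ℂ)⁻¹) •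
        ∑ g : G, trace ℂ U (resRep ρ U hU g⁻¹) • ρ g) := by
  classical
  set q : V →ₗ[ℂ] V := ∑ g : G, trace ℂ U (resRep ρ U hU g⁻¹) • ρ g with hq
  set d : ℂ := (Module.finrank ℂ U : ℂ) with hd
  set n : ℂ := (Fintype.card G : ℂ) with hn
  have hn0 : n ≠ 0 := by simp [hn, Fintype.card_ne_zero]
  have hd0 : d ≠ 0 := by
    simp only [hd, Nat.cast_ne_zero]
    intro h
    exact hUne (Submodule.finrank_eq_zero.mp h)
  have hUact : ∀ x ∈ U, q x = (n * d⁻¹) • x := by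
    obtain ⟨μ, hμ1, hμ2⟩ := scalar_on_irr ρ U hU U hU hUne hUmin
    rw [finrank_hom_self ρ U hU hUne hUmin] at hμ2
    have hμval : μ = n * d⁻¹ := by
      rw [Nat.cast_one, mul_one, ← hd, ← hn] at hμ2
      rw [← hμ2, mul_assoc, mul_inv_cancel₀ hd0, mul_one]
    intro x hx
    rw [hq]
    rw [hμ1 x hx, hμval]
  have hirr_act : ∀ V' : Submodule ℂ V, V' ∈ IrrSubs ρ → ∀ x ∈ V', q x ∈ U := by
    intro V' hV' x hx
    obtain ⟨hVinv, hVne, hVmin⟩ := hV'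
    by_cases hbot : equivariantMaps G (resRep ρ U hU) (resRep ρ V' hVinv) = ⊥
    · obtain ⟨μ, hμ1, hμ2⟩ := scalar_on_irr ρ U hU V' hVinv hVne hVmin
      have hμ0 : μ = 0 := by
        rw [hbot] at hμ2
        rw [finrank_bot] at hμ2
        simp only [Nat.cast_zero, mul_zero] at hμ2
        rcases mul_eq_zero.mp hμ2 with h | h
        · exact h
        · exfalso
          rw [Nat.cast_eq_zero] at h
          exact hVne (Submodule.finrank_eq_zero.mp h)
      rw [hq, hμ1 x hx, hμ0, zero_smul]
      exact Submodule.zero_mem U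
    · have hVU : V' = U :=
        irr_eq_of_hom_ne_bot ρ hmf U hU hUne hUmin V' hVinv hVne hVmin hbot
      subst hVU
      rw [hq, hUact x hx]
      exact Submodule.smul_mem _ _ hx
  have hqmem : ∀ x : V, q x ∈ U := by
    intro x
    have hxtop : x ∈ (⊤ : Submodule ℂ V) := trivial
    rw [← sSup_irrSubs ρ, sSup_eq_iSup' (IrrSubs ρ)] at hxtop
    refine Submodule.iSup_induction _ (motive := fun y => q y ∈ U) hxtop ?_ ?_ ?_
    · intro V' y hy
      exact hirr_act V' V'.2 y hy
    · simp
    · intro a b ha hb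
      rw [map_add]
      exact Submodule.add_mem _ ha hb
  constructor
  · intro x
    rw [LinearMap.smul_apply]
    exact Submodule.smul_mem _ _ (hqmem x)
  · intro x hx
    rw [LinearMap.smul_apply, hUact x hx, smul_smul]
    rw [show (d * n⁻¹) * (n * d⁻¹) = 1 by field_simp, one_smul]

end KeyProj2

set_option maxHeartbeats 1000000 in
open LinearMap in
/-- Let a finite group `G` act on a finite set `X` and let `A` be an integer matrix
commuting with all the permutation matrices of the action. If the permutation
representation of `G` on `ℂ[X]` is multiplicity free (every irreducible representation
of `G` maps into it with multiplicity at most one) and every irreducible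
`G`-subrepresentation of `ℂ[X]` has integer-valued character, then every complex
eigenvalue of `A` is an integer. -/
theorem eigenvalues_integral_of_multiplicity_free
    (G X : Type) [Group G] [Fintype G] [Fintype X] [DecidableEq X] [MulAction G X]
    (A : Matrix X X ℤ)
    (hcomm : ∀ g : G, A.map (Int.cast : ℤ → ℂ) * permMat G X g =
      permMat G X g * A.map (Int.cast : ℤ → ℂ))
    (hmf : ∀ (W : Type) (_ : AddCommGroup W) (_ : Module ℂ W) (ρW : Representation ℂ G W),
      IsIrreducibleRep G ρW →
      Module.finrank ℂ (equivariantMaps G ρW (ofMulActionFinsupp G X)) ≤ 1)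
    (hint : ∀ U : Submodule ℂ (X →₀ ℂ),
      (hU : ∀ (g : G) (v : X →₀ ℂ), v ∈ U → ofMulActionFinsupp G X g v ∈ U) →
      U ≠ ⊥ →
      (∀ U' : Submodule ℂ (X →₀ ℂ), U' ≤ U →
        (∀ (g : G) (v : X →₀ ℂ), v ∈ U' → ofMulActionFinsupp G X g v ∈ U') →
        U' = ⊥ ∨ U' = U) →
      ∀ g : G, ∃ m : ℤ,
        LinearMap.trace ℂ U ((ofMulActionFinsupp G X g).restrict
          (fun v hv => hU g v hv)) = (m : ℂ)) :
    ∀ c : ℂ, Module.End.HasEigenvalue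
      (Matrix.toLin' (A.map (Int.cast : ℤ → ℂ))) c → ∃ m : ℤ, c = (m : ℂ) := by
  classical
  intro c hc
  set A' : Matrix X X ℂ := A.map (Int.cast : ℤ → ℂ) with hA'
  set ρ : Representation ℂ G (X →₀ ℂ) := ofMulActionFinsupp G X with hρ
  set e : (X →₀ ℂ) ≃ₗ[ℂ] (X → ℂ) := Finsupp.linearEquivFunOnFinite ℂ ℂ X with he
  -- the intertwining property of the permutation matrices
  have hint1 : ∀ (g : G) (v : X →₀ ℂ),
      Matrix.toLin' (permMat G X g) (e v) = e (ρ g v) := by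
    intro g v
    funext x
    rw [Matrix.toLin'_apply]
    have h1 : (e (ρ g v)) x = v (g⁻¹ • x) := by
      rw [hρ]
      show Finsupp.mapDomain (g • ·) v x = v (g⁻¹ • x)
      conv_lhs => rw [← smul_inv_smul g x]
      exact Finsupp.mapDomain_apply (MulAction.injective g) v (g⁻¹ • x)
    rw [h1]
    show (∑ y : X, (permMat G X g) x y * (e v) y) = v (g⁻¹ • x)
    have h2 : ∀ y : X, (permMat G X g) x y * (e v) y
        = if y = g⁻¹ • x then v y else 0 := by
      intro y
      rw [permMat]
      simp only [Matrix.of_apply]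
      have hev : (e v) y = v y := rfl
      by_cases hy : y = g⁻¹ • x
      · have hc2 : g • y = x := by rw [hy, smul_inv_smul]
        rw [if_pos hc2, if_pos hy, hev, one_mul]
      · have hc2 : ¬ (g • y = x) := by
          intro h
          exact hy ((smul_eq_iff_eq_inv_smul g).mp h)
        rw [if_neg hc2, if_neg hy, zero_mul]
    simp only [h2]
    rw [Finset.sum_ite_eq' Finset.univ (g⁻¹ • x) (fun y => v y)]
    simp
  -- transfer A to an endomorphism of X →₀ ℂ
  set B : (X →₀ ℂ) →ₗ[ℂ] (X →₀ ℂ) := (e.symm.conj) (Matrix.toLin' A') with hB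
  have hBapp : ∀ v, B v = e.symm (Matrix.toLin' A' (e v)) := by
    intro v
    rw [hB, LinearEquiv.conj_apply]
    simp
  have hBρ : ∀ g : G, B ∘ₗ ρ g = (e.symm.conj) (Matrix.toLin' (A' * permMat G X g)) := by
    intro g
    refine LinearMap.ext fun v => ?_
    rw [LinearMap.comp_apply, hBapp, LinearEquiv.conj_apply]
    simp only [LinearMap.comp_apply, LinearEquiv.coe_coe, LinearEquiv.symm_symm]
    rw [Matrix.toLin'_mul, LinearMap.comp_apply, hint1 g v]
  have hBcomm : ∀ (g : G) (v : X →₀ ℂ), B (ρ g v) = ρ g (B v) := by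
    intro g v
    have h1 := congrArg (fun f : (X →₀ ℂ) →ₗ[ℂ] (X →₀ ℂ) => f v) (hBρ g)
    simp only [LinearMap.comp_apply] at h1
    rw [h1, LinearEquiv.conj_apply]
    simp only [LinearMap.comp_apply, LinearEquiv.coe_coe]
    rw [hcomm g, Matrix.toLin'_mul, LinearMap.comp_apply]
    simp only [LinearEquiv.symm_symm]
    have h2 : Matrix.toLin' A' (e v) = e (B v) := by
      rw [hBapp]
      simp
    rw [h2, hint1 g (B v)]
    simp
  -- the eigenspace of B at c is a nonzero invariant subspace
  obtain ⟨v, hv⟩ := hc.exists_hasEigenvector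
  have hEne : Module.End.eigenspace B c ≠ ⊥ := by
    rw [Submodule.ne_bot_iff]
    refine ⟨e.symm v, ?_, ?_⟩
    · rw [Module.End.mem_eigenspace_iff, hBapp]
      simp only [LinearEquiv.apply_symm_apply]
      rw [hv.apply_eq_smul, map_smul]
    · simp only [ne_eq, EmbeddingLike.map_eq_zero_iff]
      exact hv.right
  have hEinv : RInv ρ (Module.End.eigenspace B c) := eigenspace_rinv ρ B hBcomm c
  obtain ⟨U, hUE, hUinv, hUne, hUmin⟩ :=
    exists_min_invariant ρ (Module.End.eigenspace B c) hEinv hEne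
  -- integrality of the character of U
  have hχint := hint U hUinv hUne hUmin
  choose m hm using hχint
  -- the projection onto U
  have hproj := key_proj ρ hmf U hUinv hUne hUmin
  set d : ℂ := (Module.finrank ℂ U : ℂ) with hd
  set n : ℂ := (Fintype.card G : ℂ) with hn
  have hn0 : n ≠ 0 := by simp [hn, Fintype.card_ne_zero]
  have hd0 : d ≠ 0 := by
    simp only [hd, Nat.cast_ne_zero]
    intro h
    exact hUne (Submodule.finrank_eq_zero.mp h)
  set p : (X →₀ ℂ) →ₗ[ℂ] (X →₀ ℂ) :=
    (d * n⁻¹) • ∑ g : G, trace ℂ U (resRep ρ U hUinv g⁻¹) • ρ g with hp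
  haveI : Module.Free ℂ U := Module.Free.of_divisionRing ℂ U
  haveI : Module.Free ℂ (LinearMap.ker p) := Module.Free.of_divisionRing ℂ (LinearMap.ker p)
  have htrp : trace ℂ (X →₀ ℂ) p = d := hproj.trace
  -- B ∘ p = c • p
  have hBp : B ∘ₗ p = c • p := by
    refine LinearMap.ext fun x => ?_
    rw [LinearMap.comp_apply, LinearMap.smul_apply]
    have hpx : p x ∈ Module.End.eigenspace B c := hUE (hproj.map_mem x)
    rw [Module.End.mem_eigenspace_iff] at hpx
    exact hpx
  have htr1 : trace ℂ (X →₀ ℂ) (B ∘ₗ p) = c * d := by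
    rw [hBp, map_smul, htrp, smul_eq_mul]
  -- the other evaluation of the trace
  have htrBg : ∀ g : G, trace ℂ (X →₀ ℂ) (B ∘ₗ ρ g) = ((∑ x : X, A x (g • x) : ℤ) : ℂ) := by
    intro g
    rw [hBρ g, LinearEquiv.conj_apply]
    have : ((e.symm : (X → ℂ) →ₗ[ℂ] (X →₀ ℂ)) ∘ₗ Matrix.toLin' (A' * permMat G X g)) ∘ₗ
        (e.symm.symm : (X →₀ ℂ) →ₗ[ℂ] (X → ℂ))
        = (e.symm : (X → ℂ) →ₗ[ℂ] (X →₀ ℂ)).comp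
          ((Matrix.toLin' (A' * permMat G X g)).comp (e.symm.symm : (X →₀ ℂ) →ₗ[ℂ] (X → ℂ))) := by
      rw [LinearMap.comp_assoc]
    rw [this, LinearMap.trace_comp_comm']
    rw [LinearMap.comp_assoc]
    have h4 : ((e.symm.symm : (X →₀ ℂ) →ₗ[ℂ] (X → ℂ)).comp
        (e.symm : (X → ℂ) →ₗ[ℂ] (X →₀ ℂ))) = LinearMap.id := by
      refine LinearMap.ext fun w => ?_
      simp
    rw [h4, LinearMap.comp_id]
    -- trace of toLin' equals matrix trace
    have h5 : trace ℂ (X → ℂ) (Matrix.toLin' (A' * permMat G X g))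
        = Matrix.trace (A' * permMat G X g) := by
      rw [LinearMap.trace_eq_matrix_trace ℂ (Pi.basisFun ℂ X), LinearMap.toMatrix_eq_toMatrix',
        LinearMap.toMatrix'_toLin']
    rw [h5]
    -- compute the matrix trace
    rw [Matrix.trace]
    push_cast
    refine Finset.sum_congr rfl fun x _ => ?_
    rw [Matrix.diag_apply, Matrix.mul_apply]
    have h6 : ∀ y : X, A' x y * (permMat G X g) y x = if g • x = y then A' x y else 0 := by
      intro y
      rw [permMat]
      simp only [Matrix.of_apply]
      by_cases hy : g • x = y
      · simp [hy]
      · simp [hy]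
    simp only [h6]
    rw [Finset.sum_ite_eq Finset.univ (g • x) (fun y => A' x y)]
    simp [hA', Matrix.map_apply]
  have htr2 : trace ℂ (X →₀ ℂ) (B ∘ₗ p)
      = (d * n⁻¹) * ∑ g : G, trace ℂ U (resRep ρ U hUinv g⁻¹)
          * ((∑ x : X, A x (g • x) : ℤ) : ℂ) := by
    have hcomp : B ∘ₗ p = (d * n⁻¹) •
        ∑ g : G, trace ℂ U (resRep ρ U hUinv g⁻¹) • (B ∘ₗ ρ g) := by
      rw [hp]
      rw [LinearMap.comp_smul]
      congr 1
      rw [← Module.End.mul_eq_comp]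
      rw [Finset.mul_sum]
      refine Finset.sum_congr rfl fun g _ => ?_
      rw [mul_smul_comm, Module.End.mul_eq_comp]
    rw [hcomp, map_smul, map_sum, smul_eq_mul]
    congr 1
    refine Finset.sum_congr rfl fun g _ => ?_
    rw [map_smul, smul_eq_mul, htrBg g]
  -- put the two trace computations together
  set S : ℤ := ∑ g : G, m g⁻¹ * (∑ x : X, A x (g • x)) with hS
  have hsum : ∑ g : G, trace ℂ U (resRep ρ U hUinv g⁻¹) * ((∑ x : X, A x (g • x) : ℤ) : ℂ)
      = (S : ℂ) := by
    rw [hS]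
    push_cast
    refine Finset.sum_congr rfl fun g _ => ?_
    exact congrArg (fun z => z * ∑ x : X, ((A x (g • x) : ℤ) : ℂ)) (hm g⁻¹)
  rw [htr2, hsum] at htr1
  have hc_eq : c = (S : ℂ) * n⁻¹ := by
    have h11 : c * d * n = d * (S : ℂ) := by
      rw [← htr1]
      have h12 : d * n⁻¹ * (S : ℂ) * n = d * (S : ℂ) * (n⁻¹ * n) := by ring
      rw [h12, inv_mul_cancel₀ hn0, mul_one]
    have h13 : c * n = (S : ℂ) := by
      have h14 : d * (c * n) = d * (S : ℂ) := by linear_combination h11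
      exact mul_left_cancel₀ hd0 h14
    rw [← h13, mul_assoc, mul_inv_cancel₀ hn0, mul_one]
  -- c is an algebraic integer
  have hIntegral : IsIntegral ℤ c := by
    refine ⟨A.charpoly, A.charpoly_monic, ?_⟩
    have hroot : (minpoly ℂ (Matrix.toLin' A')).IsRoot c :=
      Module.End.hasEigenvalue_iff_isRoot.mp hc
    have hdvd : minpoly ℂ (Matrix.toLin' A') ∣ (Matrix.toLin' A').charpoly :=
      LinearMap.minpoly_dvd_charpoly _
    have hroot2 : (Matrix.toLin' A').charpoly.IsRoot c := hroot.dvd hdvd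
    have hcp : (Matrix.toLin' A').charpoly = A'.charpoly := by
      rw [← LinearMap.charpoly_toMatrix (Matrix.toLin' A') (Pi.basisFun ℂ X),
        LinearMap.toMatrix_eq_toMatrix', LinearMap.toMatrix'_toLin']
    rw [hcp, hA'] at hroot2
    have hmap : (A.map (Int.cast : ℤ → ℂ)).charpoly = A.charpoly.map (Int.castRingHom ℂ) := by
      exact Matrix.charpoly_map A (Int.castRingHom ℂ)
    rw [hmap] at hroot2
    rw [Polynomial.IsRoot, Polynomial.eval_map] at hroot2
    rwa [algebraMap_int_eq]
  -- a rational algebraic integer is an integer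
  set qr : ℚ := (S : ℚ) / (Fintype.card G : ℚ) with hqr
  have hcq : c = (qr : ℂ) := by
    rw [hqr, hc_eq]
    push_cast
    rw [div_eq_mul_inv, hn]
  have hqint : IsIntegral ℤ qr := by
    have halg : (algebraMap ℚ ℂ) qr = c := by
      rw [hcq]
      exact eq_ratCast (algebraMap ℚ ℂ) qr
    rw [← halg] at hIntegral
    exact (isIntegral_algebraMap_iff ((algebraMap ℚ ℂ).injective)).mp hIntegral
  obtain ⟨mi, hmi⟩ := IsIntegrallyClosed.isIntegral_iff.mp hqint
  refine ⟨mi, ?_⟩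
  rw [hcq, ← hmi, algebraMap_int_eq]
  push_cast
  rfl
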